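/- Let (Ω, 𝔉, μ) be a probability space, (E_m)_{m≥1} an i.i.d. sequence of exponential random variables with rate 1, and W = (2/π²) Σ_{m=1}^∞ E_m/(2m−1)². Then for every c ∈ ℝ, cosh(c/2) · E[exp(−c²W/2)] = 1. Equivalently, the exponentially tilted measure with density w ↦ cosh(c/2)·e^{−c²w/2} with respect to the law of W (i.e. the PG(1,c) distribution) is a probability measure. -/

import Mathlib

open MeasureTheory ProbabilityTheory Real Filter Finset

section Aux

lemma sinh_prod_tendsto (x : ℝ) :
    Tendsto (fun n => π * x * ∏ j ∈ Finset.range n, (1 + x ^ 2 / (j + 1) ^ 2)) atTop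
      (nhds (Real.sinh (π * x))) := by
  have h := Complex.tendsto_euler_sin_prod (x * Complex.I)
  have h2 : Complex.sin (π * (x * Complex.I)) = Real.sinh (π * x) * Complex.I := by
    rw [show (π : ℂ) * (x * Complex.I) = ((π * x : ℝ) : ℂ) * Complex.I by push_cast; ring,
      Complex.sin_mul_I, Complex.ofReal_sinh]
  rw [h2] at h
  have h3 := h.mul_const (Complex.I)⁻¹
  have key : ∀ n, (↑π * (↑x * Complex.I) * ∏ j ∈ Finset.range n,
      (1 - (↑x * Complex.I) ^ 2 / (↑j + 1) ^ 2)) * (Complex.I)⁻¹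
      = ((π * x * ∏ j ∈ Finset.range n, (1 + x ^ 2 / (j + 1) ^ 2) : ℝ) : ℂ) := by
    intro n
    have hp : ∏ j ∈ Finset.range n, ((1:ℂ) - ((x:ℂ) * Complex.I) ^ 2 / ((j:ℂ) + 1) ^ 2)
        = ((∏ j ∈ Finset.range n, (1 + x ^ 2 / (j + 1) ^ 2) : ℝ) : ℂ) := by
      push_cast
      refine Finset.prod_congr rfl fun j _ => ?_
      rw [mul_pow, Complex.I_sq]; ring
    rw [hp]
    have hPI : ∀ P : ℂ, (↑π * (↑x * Complex.I) * P) * Complex.I⁻¹ = ↑π * ↑x * P := by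
      intro P
      rw [Complex.inv_I]
      ring_nf
      rw [Complex.I_sq]
      ring
    rw [hPI]
    push_cast
    ring
  simp only [key] at h3
  have h4 : (Real.sinh (π * x) : ℂ) * Complex.I * (Complex.I)⁻¹ = (Real.sinh (π*x) : ℂ) := by
    rw [mul_assoc, Complex.mul_inv_cancel Complex.I_ne_zero, mul_one]
  rw [h4] at h3
  exact_mod_cast (Complex.continuous_re.tendsto _).comp h3


lemma prod_range_two_mul {M : Type*} [CommMonoid M] (f : ℕ → M) (N : ℕ) :
    ∏ j ∈ Finset.range (2 * N), f j
      = (∏ k ∈ Finset.range N, f (2 * k)) * ∏ k ∈ Finset.range N, f (2 * k + 1) := by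
  induction N with
  | zero => simp
  | succ n ih =>
    rw [show 2 * (n + 1) = (2 * n) + 1 + 1 by ring, Finset.prod_range_succ,
      Finset.prod_range_succ, ih, Finset.prod_range_succ, Finset.prod_range_succ]
    ac_rfl

lemma cosh_prod_tendsto {c : ℝ} (hc : c ≠ 0) :
    Tendsto (fun N => ∏ m ∈ Finset.range N, (1 + c ^ 2 / π ^ 2 / (2 * (m : ℝ) + 1) ^ 2)) atTop
      (nhds (Real.cosh (c / 2))) := by
  set t := c / (2 * π) with ht
  have hπ := Real.pi_ne_zero
  have htne : t ≠ 0 := by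
    simp only [ht, div_ne_zero_iff]
    exact ⟨hc, by positivity⟩
  have h2t : π * (2 * t) = c := by rw [ht]; field_simp
  have hπt : π * t = c / 2 := by rw [ht]; field_simp
  have hA := sinh_prod_tendsto (2 * t)
  have hB := sinh_prod_tendsto t
  rw [h2t] at hA
  rw [hπt] at hB
  have h2N : Tendsto (fun N : ℕ => 2 * N) atTop atTop :=
    tendsto_atTop_mono (fun n => by simp only [id_eq]; omega) tendsto_id
  have hA2 := hA.comp h2N
  have hBpos : ∀ N, (0:ℝ) < ∏ j ∈ Finset.range N, (1 + t ^ 2 / (j + 1) ^ 2) := by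
    intro N
    exact Finset.prod_pos fun j _ => by positivity
  have hkey : ∀ N : ℕ, ∏ m ∈ Finset.range N, (1 + c ^ 2 / π ^ 2 / (2 * (m : ℝ) + 1) ^ 2)
      = (c * ∏ j ∈ Finset.range (2 * N), (1 + (2*t) ^ 2 / (j + 1) ^ 2))
        / (2 * (c / 2 * ∏ j ∈ Finset.range N, (1 + t ^ 2 / (j + 1) ^ 2))) := by
    intro N
    rw [prod_range_two_mul (fun j => (1 + (2*t) ^ 2 / ((j:ℝ) + 1) ^ 2)) N]
    have he : ∀ k : ℕ, (1 + (2*t) ^ 2 / ((2 * k : ℕ) + (1:ℝ)) ^ 2)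
        = 1 + c ^ 2 / π ^ 2 / (2 * (k : ℝ) + 1) ^ 2 := by
      intro k
      push_cast
      congr 1
      rw [ht]
      field_simp
    have ho : ∀ k : ℕ, (1 + (2*t) ^ 2 / ((2 * k + 1 : ℕ) + (1:ℝ)) ^ 2)
        = 1 + t ^ 2 / ((k:ℝ) + 1) ^ 2 := by
      intro k
      push_cast
      congr 1
      rw [show (2*(k:ℝ) + 1 + 1) = 2 * ((k:ℝ)+1) by ring]
      rw [mul_pow, mul_pow]
      rw [mul_div_mul_left _ _ (by norm_num : (2:ℝ)^2 ≠ 0)]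
    rw [Finset.prod_congr rfl (fun k _ => he k), Finset.prod_congr rfl (fun k _ => ho k)]
    rw [eq_div_iff (by
      have h2 := (hBpos N)
      positivity)]
    ring
  have hne : Real.sinh (c / 2) ≠ 0 := Real.sinh_ne_zero.2 (div_ne_zero hc two_ne_zero)
  have hlim := hA2.div (hB.const_mul 2) (by simpa using hne)
  have : Real.sinh c / (2 * Real.sinh (c / 2)) = Real.cosh (c / 2) := by
    have h := Real.sinh_two_mul (c / 2)
    rw [show 2 * (c/2) = c by ring] at h
    rw [h]
    field_simp
  rw [← this]
  exact hlim.congr fun N => by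
    simp only [Pi.div_apply, Function.comp_apply]
    exact (hkey N).symm

lemma expPDF_eq_gamma : exponentialPDF 1 = gammaPDF 1 1 := rfl

lemma meas_gammaPDF (a r : ℝ) : Measurable (gammaPDF a r) :=
  (measurable_gammaPDFReal a r).ennreal_ofReal

lemma meas_expPDF (r : ℝ) : Measurable (exponentialPDF r) :=
  (measurable_exponentialPDFReal r).ennreal_ofReal

lemma exp_lintegral_exp (t : ℝ) (ht : 0 ≤ t) :
    ∫⁻ x, ENNReal.ofReal (Real.exp (-t * x)) ∂(expMeasure 1)
      = ENNReal.ofReal (1 + t)⁻¹ := by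
  have h1t : (0:ℝ) < 1 + t := by linarith
  rw [expMeasure, gammaMeasure,
    lintegral_withDensity_eq_lintegral_mul _ (meas_gammaPDF 1 1)
      ((by fun_prop : Measurable fun x : ℝ => Real.exp (-t * x)).ennreal_ofReal)]
  have hpw : (fun x => gammaPDF 1 1 x * ENNReal.ofReal (Real.exp (-t * x)))
      = fun x => ENNReal.ofReal (1 + t)⁻¹ * exponentialPDF (1 + t) x := by
    funext x
    rcases lt_or_ge x 0 with hx | hx
    · rw [gammaPDF_of_neg hx, exponentialPDF_of_neg hx, zero_mul, mul_zero]
    · rw [← expPDF_eq_gamma, exponentialPDF_of_nonneg hx, exponentialPDF_of_nonneg hx,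
        ← ENNReal.ofReal_mul (by positivity), ← ENNReal.ofReal_mul (by positivity)]
      congr 1
      rw [one_mul, ← Real.exp_add]
      rw [show -(1 * x) + -t * x = -((1+t) * x) by ring]
      field_simp
  simp only [Pi.mul_apply, hpw]
  rw [lintegral_const_mul _ (meas_expPDF (1+t)),
    lintegral_exponentialPDF_eq_one h1t, mul_one]

lemma exp_integral_exp (t : ℝ) (ht : 0 ≤ t) :
    ∫ x, Real.exp (-t * x) ∂(expMeasure 1) = (1 + t)⁻¹ := by
  have h1t : (0:ℝ) < 1 + t := by linarith
  rw [integral_eq_lintegral_of_nonneg_ae (ae_of_all _ fun x => (Real.exp_pos _).le)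
    ((by fun_prop : Measurable fun x : ℝ => Real.exp (-t * x)).aestronglyMeasurable),
    exp_lintegral_exp t ht, ENNReal.toReal_ofReal (by positivity)]

lemma expMeasure_neg : expMeasure 1 (Set.Iio 0) = 0 := by
  rw [expMeasure, gammaMeasure, withDensity_apply _ measurableSet_Iio]
  exact lintegral_gammaPDF_of_nonpos le_rfl

lemma exp_mean_lt_top : ∫⁻ x, ENNReal.ofReal x ∂(expMeasure 1) < ⊤ := by
  rw [expMeasure, gammaMeasure,
    lintegral_withDensity_eq_lintegral_mul _ (meas_gammaPDF 1 1)
      ((by fun_prop : Measurable fun x : ℝ => x).ennreal_ofReal)]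
  have hbound : ∀ x : ℝ, (gammaPDF 1 1 * fun x => ENNReal.ofReal x) x
      ≤ (Set.Ioi (0:ℝ)).indicator (fun x => ENNReal.ofReal (Real.exp (-(2⁻¹ * x)))) x := by
    intro x
    simp only [Pi.mul_apply]
    rcases le_or_gt x 0 with hx | hx
    · rw [Set.indicator_of_notMem (by simpa using hx)]
      rcases lt_or_eq_of_le hx with hx' | hx'
      · rw [gammaPDF_of_neg hx', zero_mul]
      · simp [hx']
    · rw [Set.indicator_of_mem (show x ∈ Set.Ioi 0 from hx), ← expPDF_eq_gamma, exponentialPDF_of_nonneg hx.le,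
        ← ENNReal.ofReal_mul (by positivity)]
      apply ENNReal.ofReal_le_ofReal
      rw [one_mul, one_mul]
      have key : x * Real.exp (-(2⁻¹ * x)) ≤ 1 := by
        have h1 : x ≤ Real.exp (2⁻¹ * x) := by
          have h2 := Real.add_one_le_exp (4⁻¹ * x)
          have h3 : Real.exp (2⁻¹ * x) = Real.exp (4⁻¹ * x) ^ 2 := by
            rw [← Real.exp_nat_mul]; norm_num; ring_nf
          nlinarith [Real.exp_pos (4⁻¹ * x), sq_nonneg (1 - 4⁻¹ * x)]
        calc x * Real.exp (-(2⁻¹ * x)) ≤ Real.exp (2⁻¹ * x) * Real.exp (-(2⁻¹ * x)) := by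
              apply mul_le_mul_of_nonneg_right h1 (Real.exp_pos _).le
          _ = 1 := by rw [← Real.exp_add]; norm_num
      have key2 : Real.exp (-x) = Real.exp (-(2⁻¹*x)) * Real.exp (-(2⁻¹*x)) := by
        rw [← Real.exp_add]; ring_nf
      calc Real.exp (-x) * x = (x * Real.exp (-(2⁻¹*x))) * Real.exp (-(2⁻¹*x)) := by
            rw [key2]; ring
        _ ≤ 1 * Real.exp (-(2⁻¹ * x)) := by
            apply mul_le_mul_of_nonneg_right key (Real.exp_pos _).le
        _ = Real.exp (-(2⁻¹ * x)) := one_mul _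
  calc ∫⁻ x, (gammaPDF 1 1 * fun x => ENNReal.ofReal x) x
      ≤ ∫⁻ x, (Set.Ioi (0:ℝ)).indicator (fun x => ENNReal.ofReal (Real.exp (-(2⁻¹ * x)))) x :=
        lintegral_mono hbound
    _ = ∫⁻ x in Set.Ioi (0:ℝ), ENNReal.ofReal (Real.exp (-(2⁻¹ * x))) := by
        exact lintegral_indicator measurableSet_Ioi _
    _ < ⊤ := by
        have hint : IntegrableOn (fun x => Real.exp (-(2⁻¹ * x))) (Set.Ioi (0:ℝ)) := by
          simpa [neg_mul, mul_comm] using exp_neg_integrableOn_Ioi (0:ℝ) (by norm_num : (0:ℝ) < 2⁻¹)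
        exact hint.lintegral_lt_top  -- guess

lemma summable_inv_sq_odd : Summable (fun m : ℕ => ((2 * (m:ℝ) + 1) ^ 2)⁻¹) := by
  have h1 : Summable (fun n : ℕ => 1 / ((n:ℝ)) ^ 2) :=
    Real.summable_one_div_nat_pow.2 one_lt_two
  have h2 : Summable (fun n : ℕ => 1 / ((n:ℝ) + 1) ^ 2) := by
    have := (summable_nat_add_iff 1).2 h1
    apply this.congr
    intro n
    push_cast
    ring
  apply Summable.of_nonneg_of_le (fun m => by positivity) _ h2
  intro m
  rw [one_div]
  apply inv_anti₀ (by positivity)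
  nlinarith [Nat.cast_nonneg (α := ℝ) m]

end Aux

/-- Let `(E_m)` be i.i.d. exponential rate-1 random variables on a probability space and
`W = (2 / π²) ∑' m, E m / (2m + 1)²` (the PG(1,0) random variable). Then for every `c ∈ ℝ`,
`cosh (c / 2) * E[exp (-c² W / 2)] = 1`; equivalently, the exponentially tilted measure
with density `w ↦ cosh (c / 2) * exp (-c² w / 2)` with respect to the law of `W`
(the PG(1,c) distribution) is a probability measure. -/
theorem pg_tilting_normalization
    {Ω : Type*} [MeasurableSpace Ω] (μ : Measure Ω) [IsProbabilityMeasure μ]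
    (E : ℕ → Ω → ℝ) (hmeas : ∀ m, Measurable (E m))
    (hindep : iIndepFun E μ)
    (hdist : ∀ m, μ.map (E m) = expMeasure 1)
    (c : ℝ) :
    Real.cosh (c / 2) *
        ∫ ω, Real.exp (-(c ^ 2 * ((2 / π ^ 2) * ∑' m : ℕ, E m ω / (2 * (m : ℝ) + 1) ^ 2)) / 2) ∂μ
      = 1 := by
  rcases eq_or_ne c 0 with rfl | hc
  · simp
  have hπ := Real.pi_ne_zero
  set t : ℝ := c ^ 2 / π ^ 2 with htdef
  have htpos : 0 < t := by positivity
  -- a.e. nonnegativity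
  have hnn : ∀ᵐ ω ∂μ, ∀ m, 0 ≤ E m ω := by
    rw [ae_all_iff]
    intro m
    rw [ae_iff]
    have hset : {ω | ¬ 0 ≤ E m ω} = E m ⁻¹' Set.Iio 0 := by
      ext ω; simp [not_le]
    rw [hset, ← Measure.map_apply (hmeas m) measurableSet_Iio, hdist m, expMeasure_neg]
  -- a.e. summability
  have hsumm : ∀ᵐ ω ∂μ, Summable (fun m : ℕ => E m ω / (2 * (m:ℝ) + 1) ^ 2) := by
    have hC := exp_mean_lt_top
    have hEm : ∀ m, ∫⁻ ω, ENNReal.ofReal (E m ω) ∂μ = ∫⁻ x, ENNReal.ofReal x ∂(expMeasure 1) := by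
      intro m
      rw [← hdist m, lintegral_map ENNReal.measurable_ofReal (hmeas m)]
    have hfin : ∫⁻ ω, ∑' m : ℕ, ENNReal.ofReal (E m ω / (2 * (m:ℝ) + 1) ^ 2) ∂μ < ⊤ := by
      rw [lintegral_tsum (fun m => ((hmeas m).div_const _).ennreal_ofReal.aemeasurable)]
      have hterm : ∀ m : ℕ, ∫⁻ ω, ENNReal.ofReal (E m ω / (2 * (m:ℝ) + 1) ^ 2) ∂μ
          = (∫⁻ x, ENNReal.ofReal x ∂(expMeasure 1))
              * ENNReal.ofReal (((2 * (m:ℝ) + 1) ^ 2)⁻¹) := by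
        intro m
        have hpw : ∀ ω, ENNReal.ofReal (E m ω / (2 * (m:ℝ) + 1) ^ 2)
            = ENNReal.ofReal (E m ω) * ENNReal.ofReal (((2 * (m:ℝ) + 1) ^ 2)⁻¹) := by
          intro ω
          rw [div_eq_mul_inv, ENNReal.ofReal_mul' (by positivity)]
        simp only [hpw]
        rw [lintegral_mul_const _ ((hmeas m).ennreal_ofReal), hEm m]
      simp only [hterm]
      rw [ENNReal.tsum_mul_left]
      apply ENNReal.mul_lt_top hC
      rw [← ENNReal.ofReal_tsum_of_nonneg (fun m => by positivity) summable_inv_sq_odd]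
      exact ENNReal.ofReal_lt_top
    have hae := ae_lt_top
      (Measurable.ennreal_tsum fun m : ℕ => ((hmeas m).div_const _).ennreal_ofReal) hfin.ne
    filter_upwards [hae, hnn] with ω hω hωnn
    have hsum := ENNReal.summable_toReal hω.ne
    exact hsum.congr fun m => ENNReal.toReal_ofReal (by have := hωnn m; positivity)
  -- the partial-product integrals
  have Ymeas : ∀ m : ℕ, Measurable (fun ω => E m ω / (2 * (m:ℝ) + 1) ^ 2) :=
    fun m => (hmeas m).div_const _
  have hstep1 : ∀ N : ℕ,
      ∫ ω, Real.exp (-t * ∑ m ∈ Finset.range N, E m ω / (2 * (m:ℝ) + 1) ^ 2) ∂μ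
        = ∏ m ∈ Finset.range N, (1 + t / (2 * (m:ℝ) + 1) ^ 2)⁻¹ := by
    intro N
    have hYindep : iIndepFun
        (fun m => fun ω => E m ω / (2 * (m:ℝ) + 1) ^ 2) μ :=
      hindep.comp (fun m x => x / (2 * (m:ℝ) + 1) ^ 2) (fun m => measurable_id.div_const _)
    have hmgf := hYindep.mgf_sum Ymeas (Finset.range N) (t := -t)
    have hlhs : ∫ ω, Real.exp (-t * ∑ m ∈ Finset.range N, E m ω / (2 * (m:ℝ) + 1) ^ 2) ∂μ
        = mgf (∑ m ∈ Finset.range N, fun ω => E m ω / (2 * (m:ℝ) + 1) ^ 2) μ (-t) := by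
      rw [mgf]
      congr 1
      funext ω
      simp only [Finset.sum_apply]
    have hterm : ∀ m : ℕ, mgf (fun ω => E m ω / (2 * (m:ℝ) + 1) ^ 2) μ (-t)
        = (1 + t / (2 * (m:ℝ) + 1) ^ 2)⁻¹ := by
      intro m
      have hd : (0:ℝ) < (2 * (m:ℝ) + 1) ^ 2 := by positivity
      have hs : (0:ℝ) ≤ t / (2 * (m:ℝ) + 1) ^ 2 := by positivity
      rw [mgf]
      have : ∀ ω, Real.exp (-t * (E m ω / (2 * (m:ℝ) + 1) ^ 2))
          = Real.exp (-(t / (2 * (m:ℝ) + 1) ^ 2) * E m ω) := by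
        intro ω; congr 1; field_simp
      simp only [this]
      have hmap : ∫ ω, Real.exp (-(t / (2 * (m:ℝ) + 1) ^ 2) * E m ω) ∂μ
          = ∫ x, Real.exp (-(t / (2 * (m:ℝ) + 1) ^ 2) * x) ∂(μ.map (E m)) := by
        rw [integral_map (hmeas m).aemeasurable
          ((by fun_prop : Measurable fun x : ℝ =>
            Real.exp (-(t / (2 * (m:ℝ) + 1) ^ 2) * x)).aestronglyMeasurable)]
      rw [hmap, hdist m, exp_integral_exp _ hs]
    rw [hlhs, hmgf]
    exact Finset.prod_congr rfl fun m _ => hterm m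
  have hstep3 : Tendsto (fun N => ∏ m ∈ Finset.range N, (1 + t / (2 * (m:ℝ) + 1) ^ 2)⁻¹)
      atTop (nhds (Real.cosh (c/2))⁻¹) := by
    have h := (cosh_prod_tendsto hc).inv₀ (Real.cosh_pos (x := c/2)).ne'
    exact h.congr fun N => by rw [← Finset.prod_inv_distrib]
  have hstep2 : Tendsto
      (fun N => ∫ ω, Real.exp (-t * ∑ m ∈ Finset.range N, E m ω / (2 * (m:ℝ) + 1) ^ 2) ∂μ)
      atTop (nhds (∫ ω, Real.exp
        (-(c ^ 2 * ((2 / π ^ 2) * ∑' m : ℕ, E m ω / (2 * (m : ℝ) + 1) ^ 2)) / 2) ∂μ)) := by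
    apply tendsto_integral_of_dominated_convergence (fun _ => (1:ℝ))
    · intro N
      exact (by fun_prop : Measurable fun ω =>
        Real.exp (-t * ∑ m ∈ Finset.range N, E m ω / (2 * (m:ℝ) + 1) ^ 2)).aestronglyMeasurable
    · exact integrable_const 1
    · intro N
      filter_upwards [hnn] with ω hω
      rw [Real.norm_eq_abs, abs_of_pos (Real.exp_pos _), Real.exp_le_one_iff]
      apply mul_nonpos_of_nonpos_of_nonneg (by linarith)
      exact Finset.sum_nonneg fun m _ => by
        have := hω m; positivity
    · filter_upwards [hsumm] with ω hω
      have h1 : Tendsto (fun N => ∑ m ∈ Finset.range N, E m ω / (2 * (m:ℝ) + 1) ^ 2)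
          atTop (nhds (∑' m : ℕ, E m ω / (2 * (m:ℝ) + 1) ^ 2)) :=
        hω.hasSum.tendsto_sum_nat
      have h2 : Tendsto (fun N => Real.exp (-t * ∑ m ∈ Finset.range N, E m ω / (2 * (m:ℝ) + 1) ^ 2))
          atTop (nhds (Real.exp (-t * ∑' m : ℕ, E m ω / (2 * (m:ℝ) + 1) ^ 2))) :=
        ((Real.continuous_exp.comp (continuous_const.mul continuous_id)).tendsto _).comp h1
      have h3 : Real.exp (-t * ∑' m : ℕ, E m ω / (2 * (m:ℝ) + 1) ^ 2)
          = Real.exp (-(c ^ 2 * ((2 / π ^ 2) * ∑' m : ℕ, E m ω / (2 * (m:ℝ) + 1) ^ 2)) / 2) := by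
        congr 1
        rw [htdef]
        ring
      rw [← h3]
      exact h2
  have hval : ∫ ω, Real.exp
      (-(c ^ 2 * ((2 / π ^ 2) * ∑' m : ℕ, E m ω / (2 * (m : ℝ) + 1) ^ 2)) / 2) ∂μ
      = (Real.cosh (c/2))⁻¹ := by
    refine tendsto_nhds_unique hstep2 ?_
    exact hstep3.congr fun N => (hstep1 N).symm
  rw [hval, mul_inv_cancel₀ (Real.cosh_pos (x := c/2)).ne']
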